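/- Let p > q be odd primes. Then Hol(D_{pq}) contains a regular subgroup isomorphic to C_p × D_q, and Hol(D_{pq}) contains a regular subgroup isomorphic to C_q × D_p. Here D_{pq} = DihedralGroup (p*q), C_p × D_q = Multiplicative (ZMod p) × DihedralGroup q, and C_q × D_p = Multiplicative (ZMod q) × DihedralGroup p; a regular subgroup of Hol(N) is a subgroup of Equiv.Perm N contained in Hol(N) that is transitive on N and has order |N|. -/

import Mathlib

/-- The left regular representation of a group `N` in `Equiv.Perm N`. -/
def leftReg (N : Type*) [Group N] : N →* Equiv.Perm N :=
  MulAction.toPermHom N N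

/-- The holomorph of `N`: the normalizer of the image of the left regular
representation inside `Equiv.Perm N`. -/
def Hol (N : Type*) [Group N] : Subgroup (Equiv.Perm N) :=
  Subgroup.normalizer ((leftReg N).range : Set (Equiv.Perm N))

/-- A subgroup of `Equiv.Perm N` is transitive on `N`. -/
def IsTransitiveSubgroup {N : Type*} [Group N] (M : Subgroup (Equiv.Perm N)) : Prop :=
  ∀ a b : N, ∃ g ∈ M, g a = b

/-- A group `G` embeds transitively in `Hol(N)` if there is an injective
homomorphism `G →* Equiv.Perm N` whose range lies in `Hol(N)` and is
transitive on `N`. -/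
def EmbedsTransitively (G : Type*) [Group G] (N : Type*) [Group N] : Prop :=
  ∃ φ : G →* Equiv.Perm N, Function.Injective φ ∧ φ.range ≤ Hol N ∧
    IsTransitiveSubgroup φ.range

@[simp] lemma leftReg_apply {N : Type*} [Group N] (g x : N) : leftReg N g x = g * x := rfl

def autPerm {N : Type*} [Group N] (α : N ≃* N) : Equiv.Perm N := α.toEquiv

@[simp] lemma autPerm_apply {N : Type*} [Group N] (α : N ≃* N) (x : N) : autPerm α x = α x := rfl

lemma autPerm_symm {N : Type*} [Group N] (α : N ≃* N) : autPerm α.symm = (autPerm α)⁻¹ := rfl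

lemma autPerm_conj {N : Type*} [Group N] (α : N ≃* N) (n : N) :
    autPerm α * leftReg N n * (autPerm α)⁻¹ = leftReg N (α n) := by
  ext x
  show α (n * α.symm x) = α n * x
  rw [map_mul, MulEquiv.apply_symm_apply]

lemma leftReg_mem_Hol {N : Type*} [Group N] (n : N) : leftReg N n ∈ Hol N :=
  Subgroup.le_normalizer ⟨n, rfl⟩

lemma autPerm_mem_Hol {N : Type*} [Group N] (α : N ≃* N) : autPerm α ∈ Hol N := by
  rw [Hol, Subgroup.mem_normalizer_iff]
  intro h
  constructor
  · rintro ⟨n, rfl⟩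
    exact ⟨α n, (autPerm_conj α n).symm⟩
  · rintro ⟨n, hn⟩
    refine ⟨α.symm n, ?_⟩
    have h2 := autPerm_conj α.symm n
    rw [autPerm_symm, inv_inv] at h2
    rw [← h2, hn]
    group

/-- automorphism of a dihedral group given by a square root of 1 -/
def dihAut (n : ℕ) (u : ZMod n) (hu : u * u = 1) : DihedralGroup n ≃* DihedralGroup n where
  toFun x := match x with
    | .r k => .r (u * k)
    | .sr k => .sr (u * k)
  invFun x := match x with
    | .r k => .r (u * k)
    | .sr k => .sr (u * k)
  left_inv x := by cases x <;> simp [← mul_assoc, hu]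
  right_inv x := by cases x <;> simp [← mul_assoc, hu]
  map_mul' x y := by
    cases x <;> cases y <;>
      simp [DihedralGroup.r_mul_r, DihedralGroup.r_mul_sr, DihedralGroup.sr_mul_r,
        DihedralGroup.sr_mul_sr, mul_add, mul_sub]

section Mix

variable (m n : ℕ) (hco : Nat.Coprime m n)

def mixFun : Multiplicative (ZMod m) × DihedralGroup n → DihedralGroup (m * n)
  | (a, .r j) => .r ((ZMod.chineseRemainder hco).symm (a.toAdd, j))
  | (a, .sr j) => .sr ((ZMod.chineseRemainder hco).symm (-a.toAdd, j))

def mixInv : DihedralGroup (m * n) → Multiplicative (ZMod m) × DihedralGroup n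
  | .r k => (Multiplicative.ofAdd ((ZMod.chineseRemainder hco) k).1,
      .r ((ZMod.chineseRemainder hco) k).2)
  | .sr k => (Multiplicative.ofAdd (-((ZMod.chineseRemainder hco) k).1),
      .sr ((ZMod.chineseRemainder hco) k).2)

def mixEquiv : (Multiplicative (ZMod m) × DihedralGroup n) ≃ DihedralGroup (m * n) where
  toFun := mixFun m n hco
  invFun := mixInv m n hco
  left_inv := by rintro ⟨a, (j | j)⟩ <;> simp [mixFun, mixInv]
  right_inv := by rintro (x | x) <;> simp [mixFun, mixInv]

lemma mix_r (a : Multiplicative (ZMod m)) (i : ZMod n)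
    (y : Multiplicative (ZMod m) × DihedralGroup n) :
    mixFun m n hco ((a, DihedralGroup.r i) * y)
      = DihedralGroup.r ((ZMod.chineseRemainder hco).symm (a.toAdd, i)) * mixFun m n hco y := by
  obtain ⟨b, (j | j)⟩ := y
  · show mixFun m n hco (a * b, DihedralGroup.r i * DihedralGroup.r j) = _
    simp only [DihedralGroup.r_mul_r, mixFun, toAdd_mul]
    congr 1
    apply (ZMod.chineseRemainder hco).injective
    simp only [map_add, RingEquiv.apply_symm_apply, Prod.mk_add_mk, Prod.ext_iff]
    all_goals exact ⟨by ring, by ring⟩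
  · show mixFun m n hco (a * b, DihedralGroup.r i * DihedralGroup.sr j) = _
    simp only [DihedralGroup.r_mul_sr, mixFun, toAdd_mul]
    congr 1
    apply (ZMod.chineseRemainder hco).injective
    simp only [map_sub, map_neg, RingEquiv.apply_symm_apply, Prod.mk_sub_mk, Prod.neg_mk,
      Prod.ext_iff]
    all_goals exact ⟨by ring, trivial⟩

def mixU : ZMod (m * n) := (ZMod.chineseRemainder hco).symm (-1, 1)

lemma mixU_sq : mixU m n hco * mixU m n hco = 1 := by
  rw [mixU, ← map_mul]
  simp

lemma mixU_mul (v : ZMod m × ZMod n) :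
    mixU m n hco * (ZMod.chineseRemainder hco).symm v
      = (ZMod.chineseRemainder hco).symm (-v.1, v.2) := by
  rw [mixU, ← map_mul]
  congr 1
  simp [Prod.ext_iff]

lemma mix_sr (a : Multiplicative (ZMod m)) (i : ZMod n)
    (y : Multiplicative (ZMod m) × DihedralGroup n) :
    mixFun m n hco ((a, DihedralGroup.sr i) * y)
      = DihedralGroup.sr ((ZMod.chineseRemainder hco).symm (-a.toAdd, i)) *
        (dihAut (m * n) (mixU m n hco) (mixU_sq m n hco)) (mixFun m n hco y) := by
  obtain ⟨b, (j | j)⟩ := y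
  · show mixFun m n hco (a * b, DihedralGroup.sr i * DihedralGroup.r j) = _
    simp only [DihedralGroup.sr_mul_r, mixFun, toAdd_mul, dihAut, MulEquiv.coe_mk,
      Equiv.coe_fn_mk, mixU_mul]
    congr 1
    apply (ZMod.chineseRemainder hco).injective
    simp only [map_add, map_neg, RingEquiv.apply_symm_apply, Prod.mk_add_mk, Prod.neg_mk,
      Prod.ext_iff]
    all_goals exact ⟨by ring, trivial⟩
  · show mixFun m n hco (a * b, DihedralGroup.sr i * DihedralGroup.sr j) = _
    simp only [DihedralGroup.sr_mul_sr, mixFun, toAdd_mul, dihAut, MulEquiv.coe_mk,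
      Equiv.coe_fn_mk, mixU_mul]
    congr 1
    apply (ZMod.chineseRemainder hco).injective
    simp only [map_sub, map_neg, RingEquiv.apply_symm_apply, Prod.mk_sub_mk, Prod.neg_mk,
      Prod.ext_iff]
    all_goals exact ⟨by ring, trivial⟩

def mixHom : (Multiplicative (ZMod m) × DihedralGroup n) →* Equiv.Perm (DihedralGroup (m * n)) where
  toFun g := (mixEquiv m n hco).permCongr (leftReg _ g)
  map_one' := by
    ext x
    simp
  map_mul' g h := by
    ext x
    simp [mul_assoc]

lemma mixHom_apply (g : Multiplicative (ZMod m) × DihedralGroup n) (x : DihedralGroup (m * n)) :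
    mixHom m n hco g x = mixFun m n hco (g * mixInv m n hco x) := rfl

lemma mixHom_mem_Hol (g : Multiplicative (ZMod m) × DihedralGroup n) :
    mixHom m n hco g ∈ Hol (DihedralGroup (m * n)) := by
  obtain ⟨a, (i | i)⟩ := g
  · have : mixHom m n hco (a, DihedralGroup.r i)
        = leftReg _ (DihedralGroup.r ((ZMod.chineseRemainder hco).symm (a.toAdd, i))) := by
      ext x
      rw [mixHom_apply, mix_r, leftReg_apply]
      congr 1
      exact (mixEquiv m n hco).right_inv x
    rw [this]
    exact leftReg_mem_Hol _
  · have : mixHom m n hco (a, DihedralGroup.sr i)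
        = leftReg _ (DihedralGroup.sr ((ZMod.chineseRemainder hco).symm (-a.toAdd, i))) *
          autPerm (dihAut (m * n) (mixU m n hco) (mixU_sq m n hco)) := by
      ext x
      rw [mixHom_apply, mix_sr, Equiv.Perm.mul_apply, leftReg_apply, autPerm_apply]
      congr 2
      exact (mixEquiv m n hco).right_inv x
    rw [this]
    exact mul_mem (leftReg_mem_Hol _) (autPerm_mem_Hol _)

lemma mixHom_injective : Function.Injective (mixHom m n hco) := by
  intro g h e
  have h1 : mixHom m n hco g (mixEquiv m n hco 1) = mixHom m n hco h (mixEquiv m n hco 1) := by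
    rw [e]
  rw [mixHom_apply, mixHom_apply] at h1
  have h2 : mixInv m n hco (mixEquiv m n hco 1) = 1 := (mixEquiv m n hco).left_inv 1
  rw [h2, mul_one, mul_one] at h1
  exact (mixEquiv m n hco).injective h1

end Mix

lemma mixMain (m n : ℕ) (hco : Nat.Coprime m n) : ∃ M : Subgroup (Equiv.Perm (DihedralGroup (m * n))),
    M ≤ Hol (DihedralGroup (m * n)) ∧ IsTransitiveSubgroup M ∧
    Nat.card M = Nat.card (DihedralGroup (m * n)) ∧
    Nonempty (M ≃* (Multiplicative (ZMod m) × DihedralGroup n)) := by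
  refine ⟨(mixHom m n hco).range, ?_, ?_, ?_, ?_⟩
  · rintro _ ⟨g, rfl⟩
    exact mixHom_mem_Hol m n hco g
  · intro a b
    refine ⟨mixHom m n hco ((mixEquiv m n hco).symm b * ((mixEquiv m n hco).symm a)⁻¹),
      ⟨_, rfl⟩, ?_⟩
    rw [mixHom_apply]
    show mixFun m n hco (_ * (mixEquiv m n hco).symm a) = b
    rw [inv_mul_cancel_right]
    exact (mixEquiv m n hco).apply_symm_apply b
  · rw [Nat.card_congr (MonoidHom.ofInjective (mixHom_injective m n hco)).toEquiv.symm,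
      Nat.card_congr (mixEquiv m n hco)]
  · exact ⟨(MonoidHom.ofInjective (mixHom_injective m n hco)).symm⟩

theorem hol_dihedral_has_regular_mixed_subgroups (p q : ℕ)
    (hp : p.Prime) (hq : q.Prime) (hpodd : Odd p) (hqodd : Odd q) (hlt : q < p) :
    (∃ M : Subgroup (Equiv.Perm (DihedralGroup (p * q))),
      M ≤ Hol (DihedralGroup (p * q)) ∧
      IsTransitiveSubgroup M ∧
      Nat.card M = Nat.card (DihedralGroup (p * q)) ∧
      Nonempty (M ≃* (Multiplicative (ZMod p) × DihedralGroup q))) ∧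
    (∃ M : Subgroup (Equiv.Perm (DihedralGroup (p * q))),
      M ≤ Hol (DihedralGroup (p * q)) ∧
      IsTransitiveSubgroup M ∧
      Nat.card M = Nat.card (DihedralGroup (p * q)) ∧
      Nonempty (M ≃* (Multiplicative (ZMod q) × DihedralGroup p))) := by
  have hne : q ≠ p := Nat.ne_of_lt hlt
  have hpq : Nat.Coprime p q := (Nat.coprime_primes hp hq).mpr hne.symm
  have hqp : Nat.Coprime q p := (Nat.coprime_primes hq hp).mpr hne
  constructor
  · exact mixMain p q hpq
  · have h := mixMain q p hqp
    rw [Nat.mul_comm q p] at h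
    exact h
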